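/- Mean and variance of the mid-distribution transform: let Z be a discrete real random variable taking countably many values z with probability mass function p_Z(z) = P(Z = z) and distribution function F_Z, and let F^mid_Z(z) = F_Z(z) − (1/2) p_Z(z) be its mid-distribution function. Then E[F^mid_Z(Z)] = 1/2 and Var[F^mid_Z(Z)] = (1/12)(1 − Σ_z p_Z(z)³). -/

import Mathlib

open scoped ENNReal

namespace MidDistAux

noncomputable def eF (P : ℝ → ℝ≥0∞) (z : ℝ) : ℝ≥0∞ := ∑' t, if t ≤ z then P t else 0
noncomputable def eA (P : ℝ → ℝ≥0∞) (z : ℝ) : ℝ≥0∞ := ∑' t, if t < z then P t else 0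

lemma pair_form (P : ℝ → ℝ≥0∞) (c : ℝ → ℝ → Prop) [∀ s z, Decidable (c s z)] :
    (∑' x : ℝ × ℝ, if c x.2 x.1 then P x.1 * P x.2 else 0)
      = ∑' z, P z * ∑' s, (if c s z then P s else 0) := by
  rw [ENNReal.tsum_prod']
  refine tsum_congr fun z => ?_
  rw [← ENNReal.tsum_mul_left]
  refine tsum_congr fun s => ?_
  split_ifs <;> simp

lemma cube_form (P : ℝ → ℝ≥0∞) (c d : ℝ → ℝ → Prop) [∀ s z, Decidable (c s z)]
    [∀ s z, Decidable (d s z)] :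
    (∑' x : ℝ × ℝ × ℝ, if c x.2.1 x.1 ∧ d x.2.2 x.1 then P x.1 * P x.2.1 * P x.2.2 else 0)
      = ∑' z, P z * (∑' s, (if c s z then P s else 0)) * ∑' t, (if d t z then P t else 0) := by
  rw [ENNReal.tsum_prod']
  refine tsum_congr fun z => ?_
  rw [ENNReal.tsum_prod']
  have h1 : ∀ s : ℝ, (∑' t : ℝ, if c s z ∧ d t z then P z * P s * P t else 0)
      = (if c s z then P z * P s else 0) * ∑' t : ℝ, (if d t z then P t else 0) := by
    intro s
    by_cases h : c s z
    · simp only [h, true_and, if_true]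
      rw [← ENNReal.tsum_mul_left]
      refine tsum_congr fun t => ?_
      split_ifs <;> simp [mul_assoc]
    · simp [h]
  calc (∑' (s : ℝ) (t : ℝ), if c s z ∧ d t z then P z * P s * P t else 0)
      = ∑' s : ℝ, (if c s z then P z * P s else 0) * ∑' t : ℝ, (if d t z then P t else 0) :=
        tsum_congr h1
    _ = (∑' s : ℝ, if c s z then P z * P s else 0) * ∑' t : ℝ, (if d t z then P t else 0) :=
        ENNReal.tsum_mul_right
    _ = (P z * ∑' s : ℝ, if c s z then P s else 0) * ∑' t : ℝ, (if d t z then P t else 0) := by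
        congr 1
        rw [← ENNReal.tsum_mul_left]
        exact tsum_congr fun s => by split_ifs <;> simp
    _ = P z * (∑' s : ℝ, if c s z then P s else 0) * ∑' t : ℝ, (if d t z then P t else 0) := by
        rw [mul_assoc]

lemma total_two (P : ℝ → ℝ≥0∞) (hP : ∑' z, P z = 1) :
    (∑' x : ℝ × ℝ, P x.1 * P x.2) = 1 := by
  rw [ENNReal.tsum_prod']
  simp_rw [ENNReal.tsum_mul_left]
  simp [hP]

lemma total_three (P : ℝ → ℝ≥0∞) (hP : ∑' z, P z = 1) :
    (∑' x : ℝ × ℝ × ℝ, P x.1 * P x.2.1 * P x.2.2) = 1 := by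
  rw [ENNReal.tsum_prod']
  simp_rw [ENNReal.tsum_prod', mul_assoc, ENNReal.tsum_mul_left, ENNReal.tsum_mul_right]
  simp [hP]

lemma pair_one (P : ℝ → ℝ≥0∞) (hP : ∑' z, P z = 1) :
    (∑' z, P z * eA P z) + (∑' z, P z * eF P z) = 1 := by
  simp only [eA, eF]
  rw [← pair_form P (fun s z => s < z), ← pair_form P (fun s z => s ≤ z)]
  have hswap : (∑' x : ℝ × ℝ, if x.2 < x.1 then P x.1 * P x.2 else 0)
      = ∑' x : ℝ × ℝ, if x.1 < x.2 then P x.1 * P x.2 else 0 := by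
    rw [← Equiv.tsum_eq (Equiv.prodComm ℝ ℝ)
      (fun x : ℝ × ℝ => if x.2 < x.1 then P x.1 * P x.2 else 0)]
    refine tsum_congr fun x => ?_
    simp only [Equiv.prodComm_apply, Prod.snd_swap, Prod.fst_swap]
    split_ifs <;> simp_all [mul_comm] <;> intro <;> linarith
  rw [hswap, ← ENNReal.tsum_add, ← total_two P hP]
  refine tsum_congr fun x => ?_
  rcases le_or_gt x.2 x.1 with h | h
  · simp [h, not_lt.2 h]
  · simp [h, not_le.2 h]

def e2 : ℝ × ℝ × ℝ ≃ ℝ × ℝ × ℝ where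
  toFun x := (x.2.1, x.1, x.2.2)
  invFun x := (x.2.1, x.1, x.2.2)
  left_inv := fun ⟨_, _, _⟩ => rfl
  right_inv := fun ⟨_, _, _⟩ => rfl

def e3 : ℝ × ℝ × ℝ ≃ ℝ × ℝ × ℝ where
  toFun x := (x.2.2, x.1, x.2.1)
  invFun x := (x.2.1, x.2.2, x.1)
  left_inv := fun ⟨_, _, _⟩ => rfl
  right_inv := fun ⟨_, _, _⟩ => rfl

lemma triple_one (P : ℝ → ℝ≥0∞) (hP : ∑' z, P z = 1) :
    (∑' z, P z * eF P z * eF P z) + (∑' z, P z * eA P z * eF P z)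
      + (∑' z, P z * eA P z * eA P z) = 1 := by
  simp only [eA, eF]
  rw [← cube_form P (fun s z => s ≤ z) (fun s z => s ≤ z),
      ← cube_form P (fun s z => s < z) (fun s z => s ≤ z),
      ← cube_form P (fun s z => s < z) (fun s z => s < z)]
  have h2 : (∑' x : ℝ × ℝ × ℝ, if x.2.1 < x.1 ∧ x.2.2 ≤ x.1 then P x.1 * P x.2.1 * P x.2.2 else 0)
      = ∑' x : ℝ × ℝ × ℝ,
          if x.1 < x.2.1 ∧ x.2.2 ≤ x.2.1 then P x.1 * P x.2.1 * P x.2.2 else 0 := by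
    rw [← Equiv.tsum_eq e2
      (fun x : ℝ × ℝ × ℝ => if x.2.1 < x.1 ∧ x.2.2 ≤ x.1 then P x.1 * P x.2.1 * P x.2.2 else 0)]
    refine tsum_congr fun x => ?_
    change (if x.1 < x.2.1 ∧ x.2.2 ≤ x.2.1 then P x.2.1 * P x.1 * P x.2.2 else 0) = _
    split_ifs <;> ring
  have h3 : (∑' x : ℝ × ℝ × ℝ, if x.2.1 < x.1 ∧ x.2.2 < x.1 then P x.1 * P x.2.1 * P x.2.2 else 0)
      = ∑' x : ℝ × ℝ × ℝ,
          if x.1 < x.2.2 ∧ x.2.1 < x.2.2 then P x.1 * P x.2.1 * P x.2.2 else 0 := by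
    rw [← Equiv.tsum_eq e3
      (fun x : ℝ × ℝ × ℝ => if x.2.1 < x.1 ∧ x.2.2 < x.1 then P x.1 * P x.2.1 * P x.2.2 else 0)]
    refine tsum_congr fun x => ?_
    change (if x.1 < x.2.2 ∧ x.2.1 < x.2.2 then P x.2.2 * P x.1 * P x.2.1 else 0) = _
    split_ifs <;> ring
  rw [h2, h3, ← ENNReal.tsum_add, ← ENNReal.tsum_add, ← total_three P hP]
  refine tsum_congr fun x => ?_
  obtain ⟨z, s, t⟩ := x
  simp only
  rcases le_or_gt s z with hs | hs
  · rcases le_or_gt t z with ht | ht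
    · rw [if_pos ⟨hs, ht⟩, if_neg (fun h => absurd h.1 (not_lt.2 hs)),
        if_neg (fun h => absurd h.1 (not_lt.2 ht))]
      simp
    · rw [if_neg (fun h => absurd h.2 (not_le.2 ht)), if_neg (fun h => absurd h.1 (not_lt.2 hs)),
        if_pos ⟨ht, lt_of_le_of_lt hs ht⟩]
      simp
  · rcases le_or_gt t s with ht | ht
    · rw [if_neg (fun h => absurd h.1 (not_le.2 hs)), if_pos ⟨hs, ht⟩,
        if_neg (fun h => absurd h.2 (not_lt.2 ht))]
      simp
    · rw [if_neg (fun h => absurd h.1 (not_le.2 hs)), if_neg (fun h => absurd h.2 (not_le.2 ht)),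
        if_pos ⟨lt_trans hs ht, ht⟩]
      simp

lemma eF_eq (P : ℝ → ℝ≥0∞) (z : ℝ) : eF P z = eA P z + P z := by
  have hpt : ∀ t : ℝ, (if t ≤ z then P t else 0)
      = (if t < z then P t else 0) + (if t = z then P t else 0) := by
    intro t
    rcases lt_trichotomy t z with h | h | h
    · simp [h, le_of_lt h, ne_of_lt h]
    · simp [h, lt_irrefl]
    · simp [not_le.2 h, not_lt.2 (le_of_lt h), ne_of_gt h]
  rw [eF, tsum_congr hpt, ENNReal.tsum_add, eA]
  congr 1
  exact (tsum_eq_single z fun b hb => if_neg hb).trans (if_pos rfl)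

lemma eA_le (P : ℝ → ℝ≥0∞) (hP : ∑' z, P z = 1) (z : ℝ) : eA P z ≤ 1 := by
  rw [← hP]
  exact ENNReal.tsum_le_tsum fun t => by split_ifs <;> simp

lemma eF_le (P : ℝ → ℝ≥0∞) (hP : ∑' z, P z = 1) (z : ℝ) : eF P z ≤ 1 := by
  rw [← hP]
  exact ENNReal.tsum_le_tsum fun t => by split_ifs <;> simp

end MidDistAux
open scoped ENNReal
open MidDistAux

/-- Mean and variance of the mid-distribution transform: let `Z`
be a discrete real random variable with countable support, probability mass
function `p` and distribution function `F(z) = P(Z ≤ z) = Σ_{t ≤ z} p(t)`, and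
let `Fmid(z) = F(z) − p(z)/2` be its mid-distribution function. Then
`E[Fmid(Z)] = 1/2` and `Var[Fmid(Z)] = (1/12)(1 − Σ_z p(z)³)`. -/
theorem mid_distribution_mean_and_variance
    (p F Fmid : ℝ → ℝ)
    (hp0 : ∀ z, 0 ≤ p z)
    (hsupp : {z : ℝ | p z ≠ 0}.Countable)
    (hpsummable : Summable p)
    (hpsum : ∑' z, p z = 1)
    (hF : ∀ z, F z = ∑' t : {t : ℝ // t ≤ z}, p t)
    (hFmid : ∀ z, Fmid z = F z - p z / 2) :
    (∑' z, p z * Fmid z = 1 / 2) ∧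
    (∑' z, p z * (Fmid z - 1 / 2) ^ 2 = (1 / 12) * (1 - ∑' z, (p z) ^ 3)) := by
  set P : ℝ → ℝ≥0∞ := fun z => ENNReal.ofReal (p z) with hPdef
  have hP1 : ∑' z, P z = 1 := by
    rw [hPdef, ← ENNReal.ofReal_tsum_of_nonneg hp0 hpsummable, hpsum, ENNReal.ofReal_one]
  have hPle : ∀ z, P z ≤ 1 := fun z => hP1 ▸ ENNReal.le_tsum z
  have hPto : ∀ z, (P z).toReal = p z := fun z => ENNReal.toReal_ofReal (hp0 z)
  have hAtop : ∀ z, eA P z ≠ ∞ :=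
    fun z => ((eA_le P hP1 z).trans_lt ENNReal.one_lt_top).ne
  set Ar : ℝ → ℝ := fun z => (eA P z).toReal with hArdef
  have hAr0 : ∀ z, 0 ≤ Ar z := fun z => ENNReal.toReal_nonneg
  have hAr1 : ∀ z, Ar z ≤ 1 := by
    intro z
    have := ENNReal.toReal_mono (by simp) (eA_le P hP1 z)
    simpa using this
  have hofAr : ∀ z, ENNReal.ofReal (Ar z) = eA P z := fun z => ENNReal.ofReal_toReal (hAtop z)
  have hple1 : ∀ z, p z ≤ 1 := by
    intro z
    have := ENNReal.toReal_mono (by simp) (hPle z)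
    rw [hPto z] at this
    simpa using this
  have hmul3 : ∀ w x y : ℝ, 0 ≤ w → 0 ≤ x → x ≤ 1 → 0 ≤ y → y ≤ 1 → w * x * y ≤ w := by
    intro w x y hw hx hx1 hy hy1
    nlinarith [mul_nonneg hw (sub_nonneg.2 hx1), mul_nonneg (mul_nonneg hw hx) (sub_nonneg.2 hy1)]
  -- F z in terms of Ar
  have hFofReal : ∀ z, ENNReal.ofReal (F z) = eF P z := by
    intro z
    have hsub : Summable (fun t : {t : ℝ // t ≤ z} => p t.1) := hpsummable.subtype _
    rw [hF z, ENNReal.ofReal_tsum_of_nonneg (fun t : {t : ℝ // t ≤ z} => hp0 t.1) hsub]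
    rw [show (∑' t : {t : ℝ // t ≤ z}, ENNReal.ofReal (p t.1)) = ∑' t : {t : ℝ | t ≤ z}, P t
      from rfl, tsum_subtype {t : ℝ | t ≤ z} P, eF]
    refine tsum_congr fun t => ?_
    by_cases h : t ≤ z <;> simp [Set.indicator_apply, Set.mem_setOf_eq, h]
  have hFz : ∀ z, F z = Ar z + p z := by
    intro z
    have h0 : 0 ≤ F z := by rw [hF z]; exact tsum_nonneg fun t => hp0 t.1
    have h1 : ENNReal.ofReal (F z) = ENNReal.ofReal (Ar z + p z) := by
      rw [hFofReal z, eF_eq, ENNReal.ofReal_add (hAr0 z) (hp0 z), hofAr]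
    exact (ENNReal.ofReal_eq_ofReal_iff h0 (add_nonneg (hAr0 z) (hp0 z))).mp h1
  have hFmid' : ∀ z, Fmid z = Ar z + p z / 2 := fun z => by rw [hFmid z, hFz z]; ring
  -- ENNReal sums
  set a : ℝ≥0∞ := ∑' z, P z * eA P z with ha
  set q2 : ℝ≥0∞ := ∑' z, P z * P z with hq2
  set t2 : ℝ≥0∞ := ∑' z, P z * eA P z * eA P z with ht2
  set b : ℝ≥0∞ := ∑' z, P z * P z * eA P z with hb
  set q3 : ℝ≥0∞ := ∑' z, P z * P z * P z with hq3
  have pairEq : a + (a + q2) = 1 := by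
    have h := pair_one P hP1
    have hPF : (∑' z, P z * eF P z) = a + q2 := by
      have : ∀ z, P z * eF P z = P z * eA P z + P z * P z := fun z => by
        rw [eF_eq]; ring
      rw [tsum_congr this, ENNReal.tsum_add]
    rw [hPF] at h
    exact h
  have tripleEq : (t2 + (b + (b + q3))) + (t2 + b) + t2 = 1 := by
    have h := triple_one P hP1
    have hT1 : (∑' z, P z * eF P z * eF P z) = t2 + (b + (b + q3)) := by
      have : ∀ z, P z * eF P z * eF P z
          = P z * eA P z * eA P z + (P z * P z * eA P z
            + (P z * P z * eA P z + P z * P z * P z)) := fun z => by rw [eF_eq]; ring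
      rw [tsum_congr this, ENNReal.tsum_add, ENNReal.tsum_add, ENNReal.tsum_add]
    have hT2 : (∑' z, P z * eA P z * eF P z) = t2 + b := by
      have : ∀ z, P z * eA P z * eF P z
          = P z * eA P z * eA P z + P z * P z * eA P z := fun z => by rw [eF_eq]; ring
      rw [tsum_congr this, ENNReal.tsum_add]
    rw [hT1, hT2] at h
    exact h
  -- transfer helper
  have key : ∀ (f : ℝ → ℝ) (g : ℝ → ℝ≥0∞), (∀ z, 0 ≤ f z) → (∀ z, f z ≤ p z) →
      (∀ z, ENNReal.ofReal (f z) = g z) → ∑' z, f z = (∑' z, g z).toReal := by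
    intro f g h0 hle hof
    have hs : Summable f := hpsummable.of_nonneg_of_le h0 hle
    have h1 : ENNReal.ofReal (∑' z, f z) = ∑' z, g z := by
      rw [ENNReal.ofReal_tsum_of_nonneg h0 hs]; exact tsum_congr hof
    rw [← h1, ENNReal.toReal_ofReal (tsum_nonneg h0)]
  have hsum_pA : Summable (fun z => p z * Ar z) :=
    hpsummable.of_nonneg_of_le (fun z => mul_nonneg (hp0 z) (hAr0 z))
      (fun z => by nlinarith [hp0 z, hAr0 z, hAr1 z])
  have hsum_pp : Summable (fun z => p z * p z) :=
    hpsummable.of_nonneg_of_le (fun z => mul_nonneg (hp0 z) (hp0 z))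
      (fun z => by nlinarith [hp0 z, hple1 z])
  have hsum_pAA : Summable (fun z => p z * Ar z * Ar z) :=
    hpsummable.of_nonneg_of_le
      (fun z => mul_nonneg (mul_nonneg (hp0 z) (hAr0 z)) (hAr0 z))
      (fun z => hmul3 _ _ _ (hp0 z) (hAr0 z) (hAr1 z) (hAr0 z) (hAr1 z))
  have hsum_ppA : Summable (fun z => p z * p z * Ar z) :=
    hpsummable.of_nonneg_of_le
      (fun z => mul_nonneg (mul_nonneg (hp0 z) (hp0 z)) (hAr0 z))
      (fun z => hmul3 _ _ _ (hp0 z) (hp0 z) (hple1 z) (hAr0 z) (hAr1 z))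
  have hsum_ppp : Summable (fun z => p z * p z * p z) :=
    hpsummable.of_nonneg_of_le
      (fun z => mul_nonneg (mul_nonneg (hp0 z) (hp0 z)) (hp0 z))
      (fun z => hmul3 _ _ _ (hp0 z) (hp0 z) (hple1 z) (hp0 z) (hple1 z))
  -- real values of the ENNReal sums
  have hva : ∑' z, p z * Ar z = a.toReal := by
    refine key _ _ (fun z => mul_nonneg (hp0 z) (hAr0 z))
      (fun z => by nlinarith [hp0 z, hAr0 z, hAr1 z]) (fun z => ?_)
    rw [ENNReal.ofReal_mul (hp0 z), hofAr]
  have hvq2 : ∑' z, p z * p z = q2.toReal := by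
    refine key _ _ (fun z => mul_nonneg (hp0 z) (hp0 z))
      (fun z => by nlinarith [hp0 z, hple1 z]) (fun z => ?_)
    rw [ENNReal.ofReal_mul (hp0 z)]
  have hvt2 : ∑' z, p z * Ar z * Ar z = t2.toReal := by
    refine key _ _ (fun z => mul_nonneg (mul_nonneg (hp0 z) (hAr0 z)) (hAr0 z))
      (fun z => hmul3 _ _ _ (hp0 z) (hAr0 z) (hAr1 z) (hAr0 z) (hAr1 z)) (fun z => ?_)
    rw [ENNReal.ofReal_mul (mul_nonneg (hp0 z) (hAr0 z)), ENNReal.ofReal_mul (hp0 z), hofAr]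
  have hvb : ∑' z, p z * p z * Ar z = b.toReal := by
    refine key _ _ (fun z => mul_nonneg (mul_nonneg (hp0 z) (hp0 z)) (hAr0 z))
      (fun z => hmul3 _ _ _ (hp0 z) (hp0 z) (hple1 z) (hAr0 z) (hAr1 z)) (fun z => ?_)
    rw [ENNReal.ofReal_mul (mul_nonneg (hp0 z) (hp0 z)), ENNReal.ofReal_mul (hp0 z), hofAr]
  have hvq3 : ∑' z, p z * p z * p z = q3.toReal := by
    refine key _ _ (fun z => mul_nonneg (mul_nonneg (hp0 z) (hp0 z)) (hp0 z))
      (fun z => hmul3 _ _ _ (hp0 z) (hp0 z) (hple1 z) (hp0 z) (hple1 z)) (fun z => ?_)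
    rw [ENNReal.ofReal_mul (mul_nonneg (hp0 z) (hp0 z)), ENNReal.ofReal_mul (hp0 z)]
  -- finiteness
  have hfinq2 : q2 ≠ ∞ := by
    intro h
    rw [h] at pairEq
    simp at pairEq
  have hfina : a ≠ ∞ := by
    intro h
    rw [h] at pairEq
    simp at pairEq
  -- real equations
  have pairEqR : a.toReal + (a.toReal + q2.toReal) = 1 := by
    have := congrArg ENNReal.toReal pairEq
    rwa [ENNReal.toReal_add hfina (by
        intro h
        rw [h] at pairEq
        simp at pairEq),
      ENNReal.toReal_add hfina hfinq2, ENNReal.toReal_one] at this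
  have hfint2 : t2 ≠ ∞ := by
    intro h
    rw [h] at tripleEq
    simp at tripleEq
  have hfinb : b ≠ ∞ := by
    intro h
    rw [h] at tripleEq
    simp at tripleEq
  have hfinq3 : q3 ≠ ∞ := by
    intro h
    rw [h] at tripleEq
    simp at tripleEq
  have tripleEqR : (t2.toReal + (b.toReal + (b.toReal + q3.toReal)))
      + (t2.toReal + b.toReal) + t2.toReal = 1 := by
    have := congrArg ENNReal.toReal tripleEq
    rwa [ENNReal.toReal_add, ENNReal.toReal_add, ENNReal.toReal_add, ENNReal.toReal_add,
      ENNReal.toReal_add, ENNReal.toReal_add, ENNReal.toReal_one] at this <;>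
      simp [ENNReal.add_ne_top, hfint2, hfinb, hfinq3]
  -- mean
  have hmean : ∑' z, p z * Fmid z = 1 / 2 := by
    have hfun : ∀ z, p z * Fmid z = p z * Ar z + (p z * p z) * (1 / 2) := by
      intro z; rw [hFmid' z]; ring
    rw [tsum_congr hfun, Summable.tsum_add hsum_pA (hsum_pp.mul_right _), tsum_mul_right, hva, hvq2]
    linarith [pairEqR]
  refine ⟨hmean, ?_⟩
  -- variance
  have hq3stmt : ∑' z, (p z) ^ 3 = ∑' z, p z * p z * p z := tsum_congr fun z => by ring
  have hfun : ∀ z, p z * (Fmid z - 1 / 2) ^ 2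
      = (p z * Ar z * Ar z + (p z * p z * Ar z + ((p z * p z * p z) * (1 / 4) + p z * (1 / 4))))
        - (p z * Ar z + (p z * p z) * (1 / 2)) := by
    intro z; rw [hFmid' z]; ring
  have hsplus : Summable (fun z => p z * Ar z * Ar z
      + (p z * p z * Ar z + ((p z * p z * p z) * (1 / 4) + p z * (1 / 4)))) :=
    hsum_pAA.add (hsum_ppA.add ((hsum_ppp.mul_right _).add (hpsummable.mul_right _)))
  have hsminus : Summable (fun z => p z * Ar z + (p z * p z) * (1 / 2)) :=
    hsum_pA.add (hsum_pp.mul_right _)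
  rw [tsum_congr hfun, Summable.tsum_sub hsplus hsminus,
    Summable.tsum_add hsum_pAA (hsum_ppA.add ((hsum_ppp.mul_right _).add (hpsummable.mul_right _))),
    Summable.tsum_add hsum_ppA ((hsum_ppp.mul_right _).add (hpsummable.mul_right _)),
    Summable.tsum_add (hsum_ppp.mul_right _) (hpsummable.mul_right _),
    Summable.tsum_add hsum_pA (hsum_pp.mul_right _),
    tsum_mul_right, tsum_mul_right, tsum_mul_right,
    hva, hvq2, hvt2, hvb, hvq3, hpsum, hq3stmt, hvq3]
  linarith [tripleEqR]
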